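/- Let n ≥ 3, p > n, α = 1 - n/p, x̄_1,…,x̄_m ∈ ℝ^n, α_j ≥ 0 with Σ_j α_j = α, and w(x) = Π_j |x - x̄_j|^{α_j}. Then w^p is a Muckenhoupt A_p weight on ℝ^n: there is C > 0 such that for every cube Q, ((1/|Q|)∫_Q w^p dx)((1/|Q|)∫_Q w^{-p/(p-1)} dx)^{p-1} ≤ C. -/

import Mathlib

open Real MeasureTheory ENNReal

/-- The axis-parallel cube with center `c` and side length `r`. -/
def cube {n : ℕ} (c : EuclideanSpace ℝ (Fin n)) (r : ℝ) : Set (EuclideanSpace ℝ (Fin n)) :=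
  {x | ∀ i, |x i - c i| ≤ r / 2}

open Metric

lemma cube_eq {n : ℕ} (c : EuclideanSpace ℝ (Fin n)) (r : ℝ) :
    cube c r = ((MeasurableEquiv.toLp 2 (Fin n → ℝ)).symm) ⁻¹'
      (Set.Icc (fun i => c i - r / 2) (fun i => c i + r / 2)) := by
  ext x
  simp only [cube, Set.mem_setOf_eq, Set.mem_preimage, Set.mem_Icc, Pi.le_def]
  have hx : ∀ i, ((MeasurableEquiv.toLp 2 (Fin n → ℝ)).symm) x i = x i := fun i => rfl
  simp only [hx]
  constructor
  · intro h
    exact ⟨fun i => by linarith [(abs_le.1 (h i)).1], fun i => by linarith [(abs_le.1 (h i)).2]⟩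
  · rintro ⟨h1, h2⟩ i
    rw [abs_le]
    exact ⟨by linarith [h1 i], by linarith [h2 i]⟩

lemma volume_cube {n : ℕ} (c : EuclideanSpace ℝ (Fin n)) {r : ℝ} (hr : 0 ≤ r) :
    volume (cube c r) = ENNReal.ofReal r ^ n := by
  rw [cube_eq, (EuclideanSpace.volume_preserving_symm_measurableEquiv_toLp (Fin n)).measure_preimage
    measurableSet_Icc.nullMeasurableSet, Real.volume_Icc_pi]
  have : ∀ i : Fin n, ENNReal.ofReal ((c i + r / 2) - (c i - r / 2)) = ENNReal.ofReal r := by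
    intro i; ring_nf
  simp only [this, Finset.prod_const, Finset.card_univ, Fintype.card_fin]

lemma measurableSet_cube {n : ℕ} (c : EuclideanSpace ℝ (Fin n)) (r : ℝ) :
    MeasurableSet (cube c r) := by
  rw [cube_eq]
  exact ((MeasurableEquiv.toLp 2 (Fin n → ℝ)).symm).measurable measurableSet_Icc


lemma norm_sub_center_le {n : ℕ} {c x : EuclideanSpace ℝ (Fin n)} {r : ℝ} (hr : 0 ≤ r)
    (hx : x ∈ cube c r) : ‖x - c‖ ≤ Real.sqrt n * (r / 2) := by
  have h1 : ‖x - c‖ = Real.sqrt (∑ i, ‖x i - c i‖ ^ 2) := by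
    rw [EuclideanSpace.norm_eq]
    congr 1
  rw [h1, show Real.sqrt n * (r / 2) = Real.sqrt (n * (r/2)^2) by
    rw [Real.sqrt_mul (Nat.cast_nonneg n), Real.sqrt_sq (by linarith)]]
  apply Real.sqrt_le_sqrt
  calc ∑ i, ‖x i - c i‖ ^ 2 ≤ ∑ _i : Fin n, (r/2)^2 := by
        apply Finset.sum_le_sum
        intro i _
        have := hx i
        rw [Real.norm_eq_abs]
        nlinarith [abs_nonneg (x i - c i)]
    _ = n * (r/2)^2 := by simp [Finset.sum_const]

lemma term_id {R : ℝ} (hR : 0 < R) (γ : ℝ) (n k : ℕ) :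
    (R / 2 ^ (k+1)) ^ (-γ) * (R / 2 ^ k) ^ n
      = 2 ^ γ * R ^ ((n:ℝ) - γ) * ((2:ℝ) ^ (γ - (n:ℝ))) ^ k := by
  have h2 : (0:ℝ) < 2 := by norm_num
  have hp1 : (0:ℝ) < R / 2 ^ (k+1) := by positivity
  have hp2 : (0:ℝ) < R / 2 ^ k := by positivity
  rw [← Real.rpow_natCast (R / 2 ^ k) n, ← Real.rpow_natCast ((2:ℝ) ^ (γ - (n:ℝ))) k,
    ← Real.rpow_mul h2.le,
    Real.rpow_def_of_pos hp1, Real.rpow_def_of_pos hp2, Real.rpow_def_of_pos h2,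
    Real.rpow_def_of_pos hR, Real.rpow_def_of_pos h2,
    Real.log_div hR.ne' (by positivity), Real.log_div hR.ne' (by positivity),
    Real.log_pow, Real.log_pow, ← Real.exp_add, ← Real.exp_add, ← Real.exp_add]
  congr 1
  push_cast
  ring

lemma ball_rpow_bound {n : ℕ} (hn : 0 < n) {γ : ℝ} (hγ0 : 0 < γ) (hγn : γ < n) :
    ∃ K : ℝ, 0 < K ∧ ∀ (y : EuclideanSpace ℝ (Fin n)) (R : ℝ), 0 < R →
      ∫⁻ x in Metric.ball y R, ENNReal.ofReal (‖x - y‖ ^ (-γ))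
        ≤ ENNReal.ofReal (K * R ^ ((n:ℝ) - γ)) := by
  haveI : Nonempty (Fin n) := ⟨⟨0, hn⟩⟩
  have hfr : Module.finrank ℝ (EuclideanSpace ℝ (Fin n)) = n := finrank_euclideanSpace_fin
  set V := volume (Metric.ball (0 : EuclideanSpace ℝ (Fin n)) 1) with hV
  have hVpos : 0 < V := measure_ball_pos _ _ one_pos
  have hVlt : V < ⊤ := measure_ball_lt_top
  have hq : ENNReal.ofReal ((2:ℝ) ^ (γ - (n:ℝ))) < 1 := by
    rw [show (1:ℝ≥0∞) = ENNReal.ofReal 1 by simp]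
    apply (ENNReal.ofReal_lt_ofReal_iff one_pos).2
    exact Real.rpow_lt_one_of_one_lt_of_neg one_lt_two (by linarith)
  set Ken : ℝ≥0∞ := ENNReal.ofReal ((2:ℝ) ^ γ) * V * (1 - ENNReal.ofReal ((2:ℝ) ^ (γ - (n:ℝ))))⁻¹
    with hKen
  have hKenlt : Ken < ⊤ := by
    apply ENNReal.mul_lt_top (ENNReal.mul_lt_top ENNReal.ofReal_lt_top hVlt)
    rw [ENNReal.inv_lt_top]
    exact tsub_pos_of_lt hq
  have hKenpos : 0 < Ken := by
    apply ENNReal.mul_pos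
    · exact (ENNReal.mul_pos (by positivity) hVpos.ne').ne'
    · simp only [ne_eq, ENNReal.inv_eq_zero]
      exact (lt_of_le_of_lt tsub_le_self (lt_top_iff_ne_top.2 one_ne_top)).ne
  refine ⟨Ken.toReal, ENNReal.toReal_pos hKenpos.ne' hKenlt.ne, fun y R hR => ?_⟩
  -- cover
  set A : ℕ → Set (EuclideanSpace ℝ (Fin n)) :=
    fun k => Metric.ball y (R / 2 ^ k) \ Metric.ball y (R / 2 ^ (k+1)) with hA
  have cover : Metric.ball y R ⊆ {y} ∪ ⋃ k : ℕ, A k := by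
    intro x hx
    rcases eq_or_ne x y with h | h
    · exact Or.inl (by simp [h])
    · right
      have ht0 : 0 < dist x y := dist_pos.2 h
      have hex : ∃ k : ℕ, R ≤ dist x y * 2 ^ (k+1) := by
        obtain ⟨k, hk⟩ := pow_unbounded_of_one_lt (R / dist x y) (one_lt_two (α := ℝ))
        refine ⟨k, ?_⟩
        have : R / dist x y < 2 ^ (k+1) :=
          lt_of_lt_of_le hk (pow_le_pow_right₀ one_le_two (Nat.le_succ k))
        calc R = (R / dist x y) * dist x y := by field_simp
          _ ≤ 2 ^ (k+1) * dist x y := by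
              apply mul_le_mul_of_nonneg_right this.le ht0.le
          _ = dist x y * 2 ^ (k+1) := by ring
      refine Set.mem_iUnion.2 ⟨Nat.find hex, ?_, ?_⟩
      · -- dist x y < R / 2 ^ (Nat.find hex)
        simp only [Metric.mem_ball]
        rcases Nat.eq_zero_or_pos (Nat.find hex) with h0 | h0
        · rw [h0]; simpa using hx
        · obtain ⟨j, hj⟩ := Nat.exists_eq_succ_of_ne_zero h0.ne'
          have := Nat.find_min hex (by omega : j < Nat.find hex)
          push_neg at this
          rw [hj]
          rw [lt_div_iff₀ (by positivity)]
          calc dist x y * 2 ^ (j+1) < R := this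
            _ = R := rfl
      · simp only [Metric.mem_ball, not_lt]
        have := Nat.find_spec hex
        rw [div_le_iff₀ (by positivity)]
        linarith [this]
  have key : ∀ k : ℕ, ∫⁻ x in A k, ENNReal.ofReal (‖x - y‖ ^ (-γ))
      ≤ ENNReal.ofReal ((2:ℝ)^γ * R ^ ((n:ℝ) - γ)) * ENNReal.ofReal (((2:ℝ) ^ (γ - (n:ℝ))) ^ k) * V := by
    intro k
    have hmeas : MeasurableSet (A k) := measurableSet_ball.diff measurableSet_ball
    have hbd : ∀ x ∈ A k, ENNReal.ofReal (‖x - y‖ ^ (-γ))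
        ≤ ENNReal.ofReal ((R / 2 ^ (k+1)) ^ (-γ)) := by
      intro x hx
      apply ENNReal.ofReal_le_ofReal
      apply Real.rpow_le_rpow_of_nonpos (by positivity) _ (by linarith)
      have : ¬ dist x y < R / 2 ^ (k+1) := fun hc => hx.2 (Metric.mem_ball.2 hc)
      rw [← dist_eq_norm]
      linarith [not_lt.1 this]
    calc ∫⁻ x in A k, ENNReal.ofReal (‖x - y‖ ^ (-γ))
        ≤ ∫⁻ _x in A k, ENNReal.ofReal ((R / 2 ^ (k+1)) ^ (-γ)) :=
          setLIntegral_mono' hmeas hbd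
      _ = ENNReal.ofReal ((R / 2 ^ (k+1)) ^ (-γ)) * volume (A k) := setLIntegral_const _ _
      _ ≤ ENNReal.ofReal ((R / 2 ^ (k+1)) ^ (-γ)) * (ENNReal.ofReal ((R / 2 ^ k) ^ n) * V) := by
          apply mul_le_mul_right
          calc volume (A k) ≤ volume (Metric.ball y (R / 2 ^ k)) :=
                measure_mono Set.diff_subset
            _ = ENNReal.ofReal ((R / 2 ^ k) ^ Module.finrank ℝ (EuclideanSpace ℝ (Fin n))) * V :=
                Measure.addHaar_ball _ _ (by positivity)
            _ = ENNReal.ofReal ((R / 2 ^ k) ^ n) * V := by rw [hfr]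
      _ = ENNReal.ofReal ((R / 2 ^ (k+1)) ^ (-γ) * (R / 2 ^ k) ^ n) * V := by
          rw [← mul_assoc, ← ENNReal.ofReal_mul (by positivity)]
      _ = ENNReal.ofReal ((2:ℝ)^γ * R ^ ((n:ℝ) - γ) * ((2:ℝ) ^ (γ - (n:ℝ))) ^ k) * V := by
          rw [term_id hR]
      _ = ENNReal.ofReal ((2:ℝ)^γ * R ^ ((n:ℝ) - γ)) * ENNReal.ofReal (((2:ℝ) ^ (γ - (n:ℝ))) ^ k) * V := by
          rw [← ENNReal.ofReal_mul (by positivity)]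
  calc ∫⁻ x in Metric.ball y R, ENNReal.ofReal (‖x - y‖ ^ (-γ))
      ≤ ∫⁻ x in {y} ∪ ⋃ k : ℕ, A k, ENNReal.ofReal (‖x - y‖ ^ (-γ)) :=
        lintegral_mono_set cover
    _ ≤ (∫⁻ x in {y}, ENNReal.ofReal (‖x - y‖ ^ (-γ)))
        + ∫⁻ x in ⋃ k : ℕ, A k, ENNReal.ofReal (‖x - y‖ ^ (-γ)) := lintegral_union_le _ _ _
    _ ≤ 0 + ∑' k : ℕ, ∫⁻ x in A k, ENNReal.ofReal (‖x - y‖ ^ (-γ)) := by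
        apply add_le_add
        · rw [setLIntegral_measure_zero _ _ (measure_singleton y)]
        · exact lintegral_iUnion_le _ _
    _ ≤ ∑' k : ℕ, ENNReal.ofReal ((2:ℝ)^γ * R ^ ((n:ℝ) - γ)) * ENNReal.ofReal (((2:ℝ) ^ (γ - (n:ℝ))) ^ k) * V := by
        rw [zero_add]
        exact ENNReal.tsum_le_tsum key
    _ = ENNReal.ofReal ((2:ℝ)^γ * R ^ ((n:ℝ) - γ)) * V * ∑' k : ℕ, (ENNReal.ofReal ((2:ℝ) ^ (γ - (n:ℝ)))) ^ k := by
        have hpo : (0:ℝ) ≤ 2 ^ (γ - (n:ℝ)) := by positivity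
        simp only [ENNReal.ofReal_pow hpo]
        rw [ENNReal.tsum_mul_right, ENNReal.tsum_mul_left]
        ring
    _ = ENNReal.ofReal ((2:ℝ)^γ * R ^ ((n:ℝ) - γ)) * V * (1 - ENNReal.ofReal ((2:ℝ) ^ (γ - (n:ℝ))))⁻¹ := by
        rw [ENNReal.tsum_geometric]
    _ = Ken * ENNReal.ofReal (R ^ ((n:ℝ) - γ)) := by
        rw [hKen, ENNReal.ofReal_mul (by positivity)]
        ring
    _ = ENNReal.ofReal (Ken.toReal * R ^ ((n:ℝ) - γ)) := by
        rw [ENNReal.ofReal_mul ENNReal.toReal_nonneg, ENNReal.ofReal_toReal hKenlt.ne]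

lemma cube_neg_rpow_bound {n : ℕ} (hn : 0 < n) {γ : ℝ} (hγ0 : 0 < γ) (hγn : γ < n) :
    ∃ κ : ℝ, 0 < κ ∧ ∀ (c y : EuclideanSpace ℝ (Fin n)) (r : ℝ), 0 < r →
      ∫⁻ x in cube c r, ENNReal.ofReal (‖x - y‖ ^ (-γ))
        ≤ ENNReal.ofReal (κ * r ^ n * (r + ‖c - y‖) ^ (-γ)) := by
  obtain ⟨K, hK, hball⟩ := ball_rpow_bound hn hγ0 hγn
  set s := Real.sqrt n with hs
  have hs1 : 1 ≤ s := by
    rw [hs, show (1:ℝ) = Real.sqrt 1 by simp]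
    exact Real.sqrt_le_sqrt (by exact_mod_cast hn)
  have hs0 : 0 < s := by linarith
  set κ₁ := K * (2*s) ^ ((n:ℝ) - γ) * (1+s) ^ γ with hκ₁
  set κ₂ := (4:ℝ) ^ γ with hκ₂
  have hκ₁0 : 0 < κ₁ := by positivity
  have hκ₂0 : 0 < κ₂ := by positivity
  refine ⟨max κ₁ κ₂, lt_max_of_lt_left hκ₁0, fun c y r hr => ?_⟩
  set d := ‖c - y‖ with hd
  have hd0 : 0 ≤ d := norm_nonneg _
  have hrd : 0 < r + d := by linarith
  have hmono : ∀ κ' : ℝ, 0 < κ' → κ' ≤ max κ₁ κ₂ →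
      ENNReal.ofReal (κ' * r ^ n * (r + d) ^ (-γ))
        ≤ ENNReal.ofReal (max κ₁ κ₂ * r ^ n * (r + d) ^ (-γ)) := by
    intro κ' h0 hle
    apply ENNReal.ofReal_le_ofReal
    have : (0:ℝ) ≤ r ^ n * (r + d) ^ (-γ) := by positivity
    calc κ' * r ^ n * (r + d) ^ (-γ) = κ' * (r ^ n * (r + d) ^ (-γ)) := by ring
      _ ≤ max κ₁ κ₂ * (r ^ n * (r + d) ^ (-γ)) := mul_le_mul_of_nonneg_right hle this
      _ = max κ₁ κ₂ * r ^ n * (r + d) ^ (-γ) := by ring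
  -- triangle bounds on cube
  rcases lt_or_ge d (s * r) with hcase | hcase
  · -- near case
    have hsub : cube c r ⊆ Metric.ball y (2 * s * r) := by
      intro x hx
      have h1 : ‖x - c‖ ≤ s * (r / 2) := norm_sub_center_le hr.le hx
      have h2 : ‖x - y‖ ≤ ‖x - c‖ + ‖c - y‖ := by
        calc ‖x - y‖ = ‖(x - c) + (c - y)‖ := by rw [sub_add_sub_cancel]
          _ ≤ ‖x - c‖ + ‖c - y‖ := norm_add_le _ _
      rw [Metric.mem_ball, dist_eq_norm]
      have : s * (r/2) < s * r := by nlinarith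
      calc ‖x - y‖ ≤ s * (r/2) + d := by linarith
        _ < 2 * s * r := by nlinarith
    calc ∫⁻ x in cube c r, ENNReal.ofReal (‖x - y‖ ^ (-γ))
        ≤ ∫⁻ x in Metric.ball y (2*s*r), ENNReal.ofReal (‖x - y‖ ^ (-γ)) :=
          lintegral_mono_set hsub
      _ ≤ ENNReal.ofReal (K * (2*s*r) ^ ((n:ℝ) - γ)) := hball y _ (by positivity)
      _ ≤ ENNReal.ofReal (κ₁ * r ^ n * (r + d) ^ (-γ)) := by
          apply ENNReal.ofReal_le_ofReal
          have e1 : (2*s*r) ^ ((n:ℝ) - γ) = (2*s) ^ ((n:ℝ) - γ) * (r ^ n * r ^ (-γ)) := by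
            rw [Real.mul_rpow (by positivity) hr.le]
            congr 1
            rw [Real.rpow_sub hr, Real.rpow_neg hr.le, Real.rpow_natCast]
            field_simp
          have e2 : r ^ (-γ) ≤ (1+s) ^ γ * (r + d) ^ (-γ) := by
            have h3 : r + d ≤ (1+s) * r := by nlinarith
            have h4 : (0:ℝ) < (1+s) * r := by positivity
            calc r ^ (-γ) ≤ ((r + d) / (1+s)) ^ (-γ) := by
                  apply Real.rpow_le_rpow_of_nonpos (by positivity) _ (by linarith)
                  rw [div_le_iff₀ (by positivity)]
                  linarith [h3]
              _ = (1+s) ^ γ * (r + d) ^ (-γ) := by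
                  rw [Real.div_rpow hrd.le (by positivity), Real.rpow_neg hrd.le,
                    Real.rpow_neg (by positivity : (0:ℝ) ≤ 1+s)]
                  simp only [mul_inv, inv_inv, div_eq_mul_inv]
                  ring
          calc K * (2*s*r) ^ ((n:ℝ) - γ)
              = K * (2*s) ^ ((n:ℝ) - γ) * r ^ n * r ^ (-γ) := by rw [e1]; ring
            _ ≤ K * (2*s) ^ ((n:ℝ) - γ) * r ^ n * ((1+s) ^ γ * (r + d) ^ (-γ)) := by
                apply mul_le_mul_of_nonneg_left e2 (by positivity)
            _ = κ₁ * r ^ n * (r + d) ^ (-γ) := by rw [hκ₁]; ring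
      _ ≤ _ := hmono κ₁ hκ₁0 (le_max_left _ _)
  · -- far case
    have hlow : ∀ x ∈ cube c r, (r + d) / 4 ≤ ‖x - y‖ := by
      intro x hx
      have h1 : ‖x - c‖ ≤ s * (r / 2) := norm_sub_center_le hr.le hx
      have h2 : d ≤ ‖x - c‖ + ‖x - y‖ := by
        calc d = ‖(c - x) + (x - y)‖ := by rw [sub_add_sub_cancel]
          _ ≤ ‖c - x‖ + ‖x - y‖ := norm_add_le _ _
          _ = ‖x - c‖ + ‖x - y‖ := by rw [norm_sub_rev]
      have h3 : r ≤ d := by nlinarith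
      have h4 : s * (r/2) ≤ d / 2 := by nlinarith
      nlinarith
    calc ∫⁻ x in cube c r, ENNReal.ofReal (‖x - y‖ ^ (-γ))
        ≤ ∫⁻ _x in cube c r, ENNReal.ofReal (((r + d)/4) ^ (-γ)) := by
          apply setLIntegral_mono' (measurableSet_cube c r)
          intro x hx
          apply ENNReal.ofReal_le_ofReal
          exact Real.rpow_le_rpow_of_nonpos (by positivity) (hlow x hx) (by linarith)
      _ = ENNReal.ofReal (((r + d)/4) ^ (-γ)) * volume (cube c r) := setLIntegral_const _ _
      _ = ENNReal.ofReal (((r + d)/4) ^ (-γ)) * ENNReal.ofReal (r ^ n) := by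
          rw [volume_cube c hr.le, ← ENNReal.ofReal_pow hr.le]
      _ = ENNReal.ofReal (κ₂ * r ^ n * (r + d) ^ (-γ)) := by
          rw [← ENNReal.ofReal_mul (by positivity)]
          congr 1
          rw [Real.div_rpow hrd.le (by norm_num), Real.rpow_neg hrd.le,
            Real.rpow_neg (by norm_num : (0:ℝ) ≤ 4), hκ₂]
          simp only [mul_inv, inv_inv, div_eq_mul_inv]
          ring
      _ ≤ _ := hmono κ₂ hκ₂0 (le_max_right _ _)

lemma my_measurable_rpow_const (c : ℝ) : Measurable fun t : ℝ => t ^ c := by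
  measurability

lemma meas_prod_rpow {n m : ℕ} (xbar : Fin m → EuclideanSpace ℝ (Fin n)) (e : Fin m → ℝ) :
    Measurable fun x : EuclideanSpace ℝ (Fin n) => ∏ j, ‖x - xbar j‖ ^ (e j) := by
  apply Finset.measurable_prod
  intro j _
  exact (my_measurable_rpow_const (e j)).comp ((measurable_id.sub measurable_const).norm)

theorem stmt5 (n m : ℕ) (hn : 3 ≤ n) (p : ℝ) (hp : (n : ℝ) < p)
    (α : ℝ) (hα : α = 1 - n / p)
    (xbar : Fin m → EuclideanSpace ℝ (Fin n)) (a : Fin m → ℝ)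
    (ha : ∀ j, 0 ≤ a j) (hsum : ∑ j, a j = α)
    (w : EuclideanSpace ℝ (Fin n) → ℝ)
    (hw : ∀ x, w x = ∏ j, ‖x - xbar j‖ ^ a j) :
    ∃ C > 0, ∀ (c : EuclideanSpace ℝ (Fin n)) (r : ℝ), 0 < r →
      ((1 / r ^ n) * ∫ x in cube c r, (w x) ^ p) *
        ((1 / r ^ n) * ∫ x in cube c r, (w x) ^ (-(p / (p - 1)))) ^ (p - 1) ≤ C := by
  have hn0 : 0 < n := by omega
  have hn3 : (3:ℝ) ≤ n := by exact_mod_cast hn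
  have hp0 : (0:ℝ) < p := by linarith
  have hp1 : (1:ℝ) < p := by linarith
  have hpm1 : (0:ℝ) < p - 1 := by linarith
  have hα0 : 0 < α := by
    rw [hα, sub_pos, div_lt_one hp0]; exact hp
  have hαp : α * p = p - n := by rw [hα]; field_simp
  set γ : ℝ := α * p / (p - 1) with hγ
  have hγ0 : 0 < γ := div_pos (mul_pos hα0 hp0) hpm1
  have hγn : γ < n := by
    rw [hγ, div_lt_iff₀ hpm1, hαp]
    nlinarith
  -- exponent identity
  have hexp : ∀ j, a j * (-(p / (p - 1))) = -γ * (a j / α) := by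
    intro j
    rw [hγ]
    field_simp
  obtain ⟨κ, hκ0, hκ⟩ := cube_neg_rpow_bound hn0 hγ0 hγn
  set s : ℝ := Real.sqrt n with hs
  have hs1 : 1 ≤ s := by
    rw [hs, show (1:ℝ) = Real.sqrt 1 by simp]
    exact Real.sqrt_le_sqrt (by linarith)
  have hs0 : 0 < s := by linarith
  have hw0 : ∀ x, 0 ≤ w x := fun x => by
    rw [hw x]; exact Finset.prod_nonneg fun j _ => Real.rpow_nonneg (norm_nonneg _) _
  refine ⟨s ^ (p * α) * κ ^ (p - 1), by positivity, fun c r hr => ?_⟩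
  set d : Fin m → ℝ := fun j => ‖c - xbar j‖ with hd
  have hd0 : ∀ j, 0 ≤ d j := fun j => norm_nonneg _
  have hrd : ∀ j, 0 < r + d j := fun j => by have := hd0 j; linarith
  set Q := cube c r with hQ
  have hθ : ∑ j, a j / α = 1 := by
    rw [← Finset.sum_div, hsum, div_self hα0.ne']
  have hθ0 : ∀ j, 0 ≤ a j / α := fun j => div_nonneg (ha j) hα0.le
  -- pointwise product forms
  have hwp : ∀ x, (w x) ^ p = ∏ j, ‖x - xbar j‖ ^ (a j * p) := by
    intro x
    rw [hw x, ← Real.finset_prod_rpow _ _ (fun j _ => Real.rpow_nonneg (norm_nonneg _) _) p]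
    exact Finset.prod_congr rfl fun j _ => (Real.rpow_mul (norm_nonneg _) _ _).symm
  have hwn : ∀ x, (w x) ^ (-(p / (p - 1))) = ∏ j, ‖x - xbar j‖ ^ (a j * (-(p / (p - 1)))) := by
    intro x
    rw [hw x, ← Real.finset_prod_rpow _ _ (fun j _ => Real.rpow_nonneg (norm_nonneg _) _) _]
    exact Finset.prod_congr rfl fun j _ => (Real.rpow_mul (norm_nonneg _) _ _).symm
  -- first integral bound
  set T : ℝ := ∏ j, (r + d j) ^ (a j * p) with hT
  have hT0 : 0 < T := Finset.prod_pos fun j _ => Real.rpow_pos_of_pos (hrd j) _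
  set M : ℝ := ∏ j, (s * (r + d j)) ^ (a j * p) with hM
  have hM0 : 0 ≤ M := Finset.prod_nonneg fun j _ => Real.rpow_nonneg (by positivity) _
  have hM_eq : M = s ^ (p * α) * T := by
    rw [hM, hT]
    have : ∀ j ∈ Finset.univ, (s * (r + d j)) ^ (a j * p)
        = s ^ (a j * p) * (r + d j) ^ (a j * p) := fun j _ =>
      Real.mul_rpow hs0.le (hrd j).le
    rw [Finset.prod_congr rfl this, Finset.prod_mul_distrib,
      ← Real.rpow_sum_of_pos hs0]
    congr 2
    rw [← Finset.sum_mul, hsum]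
    ring
  have hnorm_le : ∀ x ∈ Q, ∀ j, ‖x - xbar j‖ ≤ s * (r + d j) := by
    intro x hx j
    have h1 : ‖x - c‖ ≤ s * (r / 2) := norm_sub_center_le hr.le hx
    have h2 : ‖x - xbar j‖ ≤ ‖x - c‖ + d j := by
      calc ‖x - xbar j‖ = ‖(x - c) + (c - xbar j)‖ := by rw [sub_add_sub_cancel]
        _ ≤ ‖x - c‖ + d j := norm_add_le _ _
    have := hd0 j
    nlinarith
  have hQbound : ∀ x ∈ Q, (w x) ^ p ≤ M := by
    intro x hx
    rw [hwp x, hM]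
    apply Finset.prod_le_prod (fun j _ => Real.rpow_nonneg (norm_nonneg _) _)
    intro j _
    exact Real.rpow_le_rpow (norm_nonneg _) (hnorm_le x hx j) (mul_nonneg (ha j) hp0.le)
  have hmw1 : Measurable fun x : EuclideanSpace ℝ (Fin n) => ∏ j, ‖x - xbar j‖ ^ (a j * p) :=
    meas_prod_rpow xbar _
  have hF1 : (∫ x in Q, (w x) ^ p) ≤ M * r ^ n ∧ 0 ≤ ∫ x in Q, (w x) ^ p := by
    have heq := MeasureTheory.integral_eq_lintegral_of_nonneg_ae
      (μ := volume.restrict Q) (f := fun x => (w x) ^ p)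
      (Filter.Eventually.of_forall fun x => Real.rpow_nonneg (hw0 x) _)
      (by
        apply Measurable.aestronglyMeasurable
        have : (fun x => (w x) ^ p) = fun x => ∏ j, ‖x - xbar j‖ ^ (a j * p) := funext hwp
        rw [this]; exact hmw1)
    rw [heq]
    constructor
    · apply ENNReal.toReal_le_of_le_ofReal (by positivity)
      calc ∫⁻ x in Q, ENNReal.ofReal ((w x) ^ p)
          ≤ ∫⁻ _x in Q, ENNReal.ofReal M :=
            setLIntegral_mono' (measurableSet_cube c r)
              (fun x hx => ENNReal.ofReal_le_ofReal (hQbound x hx))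
        _ = ENNReal.ofReal M * volume Q := setLIntegral_const _ _
        _ = ENNReal.ofReal (M * r ^ n) := by
            rw [hQ, volume_cube c hr.le, ← ENNReal.ofReal_pow hr.le,
              ← ENNReal.ofReal_mul hM0]
    · exact ENNReal.toReal_nonneg
  -- second integral bound
  set f : Fin m → EuclideanSpace ℝ (Fin n) → ℝ≥0∞ :=
    fun j x => ENNReal.ofReal (‖x - xbar j‖ ^ (-γ)) with hf
  have hprod : ∀ x, ENNReal.ofReal ((w x) ^ (-(p / (p - 1)))) = ∏ j, (f j x) ^ (a j / α) := by
    intro x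
    rw [hwn x, ENNReal.ofReal_prod_of_nonneg (fun j _ => Real.rpow_nonneg (norm_nonneg _) _)]
    apply Finset.prod_congr rfl
    intro j _
    rw [hexp j, Real.rpow_mul (norm_nonneg _), hf,
      ENNReal.ofReal_rpow_of_nonneg (Real.rpow_nonneg (norm_nonneg _) _) (hθ0 j)]
  set B₂ : ℝ := κ * r ^ n * ∏ j, (r + d j) ^ (a j * (-(p / (p - 1)))) with hB₂
  have hB₂0 : 0 ≤ B₂ := by
    apply mul_nonneg (by positivity)
    exact Finset.prod_nonneg fun j _ => Real.rpow_nonneg (hrd j).le _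
  have hL2 : ∫⁻ x in Q, ENNReal.ofReal ((w x) ^ (-(p / (p - 1)))) ≤ ENNReal.ofReal B₂ := by
    have hmf : ∀ j ∈ Finset.univ, AEMeasurable (f j) (volume.restrict Q) := by
      intro j _
      apply Measurable.aemeasurable
      rw [hf]
      exact ENNReal.measurable_ofReal.comp
        ((my_measurable_rpow_const (-γ)).comp ((measurable_id.sub measurable_const).norm))
    calc ∫⁻ x in Q, ENNReal.ofReal ((w x) ^ (-(p / (p - 1))))
        = ∫⁻ x in Q, ∏ j, (f j x) ^ (a j / α) := lintegral_congr fun x => hprod x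
      _ ≤ ∏ j, (∫⁻ x in Q, f j x) ^ (a j / α) :=
          ENNReal.lintegral_prod_norm_pow_le _ hmf hθ (fun j _ => hθ0 j)
      _ ≤ ∏ j, (ENNReal.ofReal (κ * r ^ n * (r + d j) ^ (-γ))) ^ (a j / α) := by
          apply Finset.prod_le_prod' 
          intro j _
          exact ENNReal.rpow_le_rpow (hκ c (xbar j) r hr) (hθ0 j)
      _ = ∏ j, ENNReal.ofReal ((κ * r ^ n * (r + d j) ^ (-γ)) ^ (a j / α)) := by
          apply Finset.prod_congr rfl
          intro j _
          rw [ENNReal.ofReal_rpow_of_nonneg (by positivity) (hθ0 j)]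
      _ = ENNReal.ofReal (∏ j, (κ * r ^ n * (r + d j) ^ (-γ)) ^ (a j / α)) :=
          (ENNReal.ofReal_prod_of_nonneg fun j _ => Real.rpow_nonneg (by positivity) _).symm
      _ = ENNReal.ofReal B₂ := by
          congr 1
          rw [hB₂]
          have : ∀ j ∈ Finset.univ, (κ * r ^ n * (r + d j) ^ (-γ)) ^ (a j / α)
              = (κ * r ^ n) ^ (a j / α) * (r + d j) ^ (a j * (-(p / (p - 1)))) := by
            intro j _
            rw [Real.mul_rpow (by positivity) (Real.rpow_nonneg (hrd j).le _),
              ← Real.rpow_mul (hrd j).le]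
            congr 1
            rw [hexp j]
          rw [Finset.prod_congr rfl this, Finset.prod_mul_distrib,
            ← Real.rpow_sum_of_pos (by positivity), hθ, Real.rpow_one]
  have hF2 : (∫ x in Q, (w x) ^ (-(p / (p - 1)))) ≤ B₂ ∧
      0 ≤ ∫ x in Q, (w x) ^ (-(p / (p - 1))) := by
    have heq := MeasureTheory.integral_eq_lintegral_of_nonneg_ae
      (μ := volume.restrict Q) (f := fun x => (w x) ^ (-(p / (p - 1))))
      (Filter.Eventually.of_forall fun x => Real.rpow_nonneg (hw0 x) _)
      (by
        apply Measurable.aestronglyMeasurable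
        have : (fun x => (w x) ^ (-(p / (p - 1))))
            = fun x => ∏ j, ‖x - xbar j‖ ^ (a j * (-(p / (p - 1)))) := funext hwn
        rw [this]
        exact meas_prod_rpow xbar _)
    rw [heq]
    exact ⟨ENNReal.toReal_le_of_le_ofReal hB₂0 hL2, ENNReal.toReal_nonneg⟩
  -- final arithmetic
  have hrn : (0:ℝ) < r ^ n := by positivity
  have hfac1 : (1 / r ^ n) * (∫ x in Q, (w x) ^ p) ≤ s ^ (p * α) * T := by
    rw [div_mul_eq_mul_div, one_mul, div_le_iff₀ hrn]
    calc (∫ x in Q, (w x) ^ p) ≤ M * r ^ n := hF1.1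
      _ = s ^ (p * α) * T * r ^ n := by rw [hM_eq]
  have hfac2 : ((1 / r ^ n) * ∫ x in Q, (w x) ^ (-(p / (p - 1)))) ^ (p - 1)
      ≤ κ ^ (p - 1) * T⁻¹ := by
    have hbase : (1 / r ^ n) * (∫ x in Q, (w x) ^ (-(p / (p - 1))))
        ≤ κ * ∏ j, (r + d j) ^ (a j * (-(p / (p - 1)))) := by
      rw [div_mul_eq_mul_div, one_mul, div_le_iff₀ hrn]
      calc (∫ x in Q, (w x) ^ (-(p / (p - 1)))) ≤ B₂ := hF2.1
        _ = κ * (∏ j, (r + d j) ^ (a j * (-(p / (p - 1))))) * r ^ n := by rw [hB₂]; ring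
    have hbase0 : 0 ≤ (1 / r ^ n) * (∫ x in Q, (w x) ^ (-(p / (p - 1)))) :=
      mul_nonneg (by positivity) hF2.2
    calc ((1 / r ^ n) * ∫ x in Q, (w x) ^ (-(p / (p - 1)))) ^ (p - 1)
        ≤ (κ * ∏ j, (r + d j) ^ (a j * (-(p / (p - 1))))) ^ (p - 1) :=
          Real.rpow_le_rpow hbase0 hbase hpm1.le
      _ = κ ^ (p - 1) * T⁻¹ := by
          rw [Real.mul_rpow hκ0.le
            (Finset.prod_nonneg fun j _ => Real.rpow_nonneg (hrd j).le _)]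
          congr 1
          rw [← Real.finset_prod_rpow _ _ (fun j _ => Real.rpow_nonneg (hrd j).le _) _,
            hT, ← Finset.prod_inv_distrib]
          apply Finset.prod_congr rfl
          intro j _
          rw [← Real.rpow_mul (hrd j).le, ← Real.rpow_neg (hrd j).le]
          congr 1
          field_simp
  calc ((1 / r ^ n) * ∫ x in Q, (w x) ^ p) *
        ((1 / r ^ n) * ∫ x in Q, (w x) ^ (-(p / (p - 1)))) ^ (p - 1)
      ≤ (s ^ (p * α) * T) * (κ ^ (p - 1) * T⁻¹) := by
        apply mul_le_mul hfac1 hfac2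
        · exact Real.rpow_nonneg (mul_nonneg (by positivity) hF2.2) _
        · positivity
    _ = s ^ (p * α) * κ ^ (p - 1) := by
        field_simp
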